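/- Suppose U_LD, U_RD, U_LU, U_RU ∈ G with fluxes F and G in the x- and y-directions, and wave speeds satisfying S_L ≤ 2λ_A^{(1)}, S_R ≥ 2λ_A^{(4)}, S_D ≤ 2λ_B^{(1)}, S_U ≥ 2λ_B^{(4)} at each of the four states, with S_L < 0 < S_R and S_D < 0 < S_U. Then each of the four states H_LD = U_LD - F(U_LD)/S_L - G(U_LD)/S_D, H_RD = U_RD - F(U_RD)/S_R - G(U_RD)/S_D, H_LU = U_LU - F(U_LU)/S_L - G(U_LU)/S_U, H_RU = U_RU - F(U_RU)/S_R - G(U_RU)/S_U belongs to G. -/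

import Mathlib

/-- A 2D special RHD state given by primitive variables. -/
structure RHDState where
  ρ : ℝ
  u1 : ℝ
  u2 : ℝ
  p : ℝ
  hρ : 0 < ρ
  hp : 0 < p
  hu : u1 ^ 2 + u2 ^ 2 < 1

namespace RHDState

/-- Lorentz factor `γ = 1/√(1-|u|²)`. -/
noncomputable def lorentz (s : RHDState) : ℝ :=
  1 / Real.sqrt (1 - (s.u1 ^ 2 + s.u2 ^ 2))

/-- Specific enthalpy `h = 1 + e + p/ρ` with `e = p/((Γ-1)ρ)`. -/
noncomputable def enth (Γ : ℝ) (s : RHDState) : ℝ :=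
  1 + s.p / ((Γ - 1) * s.ρ) + s.p / s.ρ

/-- Sound speed `c_s = √(Γp/(ρh))`. -/
noncomputable def cs (Γ : ℝ) (s : RHDState) : ℝ :=
  Real.sqrt (Γ * s.p / (s.ρ * s.enth Γ))

/-- Conserved mass density `D = ργ`. -/
noncomputable def D (s : RHDState) : ℝ := s.ρ * s.lorentz

/-- Momentum `m₁ = ρhγ²u₁`. -/
noncomputable def m1 (Γ : ℝ) (s : RHDState) : ℝ :=
  s.ρ * s.enth Γ * s.lorentz ^ 2 * s.u1

/-- Momentum `m₂ = ρhγ²u₂`. -/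
noncomputable def m2 (Γ : ℝ) (s : RHDState) : ℝ :=
  s.ρ * s.enth Γ * s.lorentz ^ 2 * s.u2

/-- Total energy `E = ρhγ² - p`. -/
noncomputable def En (Γ : ℝ) (s : RHDState) : ℝ :=
  s.ρ * s.enth Γ * s.lorentz ^ 2 - s.p

/-- Conserved vector `U = (D, m₁, m₂, E)`. -/
noncomputable def U (Γ : ℝ) (s : RHDState) : Fin 4 → ℝ :=
  ![s.D, s.m1 Γ, s.m2 Γ, s.En Γ]

/-- `x`-direction flux `F(U) = (Du₁, m₁u₁ + p, m₂u₁, (E+p)u₁)`. -/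
noncomputable def Fx (Γ : ℝ) (s : RHDState) : Fin 4 → ℝ :=
  ![s.D * s.u1, s.m1 Γ * s.u1 + s.p, s.m2 Γ * s.u1, (s.En Γ + s.p) * s.u1]

/-- `y`-direction flux `G(U) = (Du₂, m₁u₂, m₂u₂ + p, (E+p)u₂)`. -/
noncomputable def Fy (Γ : ℝ) (s : RHDState) : Fin 4 → ℝ :=
  ![s.D * s.u2, s.m1 Γ * s.u2, s.m2 Γ * s.u2 + s.p, (s.En Γ + s.p) * s.u2]

/-- Smallest eigenvalue of `∂F/∂U`. -/
noncomputable def lamX1 (Γ : ℝ) (s : RHDState) : ℝ :=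
  (s.u1 * (1 - (s.cs Γ) ^ 2) - s.cs Γ / s.lorentz *
      Real.sqrt (1 - s.u1 ^ 2 - (s.cs Γ) ^ 2 * s.u2 ^ 2)) /
    (1 - (s.cs Γ) ^ 2 * (s.u1 ^ 2 + s.u2 ^ 2))

/-- Largest eigenvalue of `∂F/∂U`. -/
noncomputable def lamX4 (Γ : ℝ) (s : RHDState) : ℝ :=
  (s.u1 * (1 - (s.cs Γ) ^ 2) + s.cs Γ / s.lorentz *
      Real.sqrt (1 - s.u1 ^ 2 - (s.cs Γ) ^ 2 * s.u2 ^ 2)) /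
    (1 - (s.cs Γ) ^ 2 * (s.u1 ^ 2 + s.u2 ^ 2))

/-- Smallest eigenvalue of `∂G/∂U`. -/
noncomputable def lamY1 (Γ : ℝ) (s : RHDState) : ℝ :=
  (s.u2 * (1 - (s.cs Γ) ^ 2) - s.cs Γ / s.lorentz *
      Real.sqrt (1 - s.u2 ^ 2 - (s.cs Γ) ^ 2 * s.u1 ^ 2)) /
    (1 - (s.cs Γ) ^ 2 * (s.u1 ^ 2 + s.u2 ^ 2))

/-- Largest eigenvalue of `∂G/∂U`. -/
noncomputable def lamY4 (Γ : ℝ) (s : RHDState) : ℝ :=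
  (s.u2 * (1 - (s.cs Γ) ^ 2) + s.cs Γ / s.lorentz *
      Real.sqrt (1 - s.u2 ^ 2 - (s.cs Γ) ^ 2 * s.u1 ^ 2)) /
    (1 - (s.cs Γ) ^ 2 * (s.u1 ^ 2 + s.u2 ^ 2))

end RHDState

/-- The admissible set `G` in conserved variables `(D, m₁, m₂, E)`. -/
def admissibleSet : Set (Fin 4 → ℝ) :=
  {X | X 0 > 0 ∧ X 3 - Real.sqrt ((X 0) ^ 2 + (X 1) ^ 2 + (X 2) ^ 2) > 0}

/-- If the four corner states are admissible and the wave speeds satisfy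
`S_L ≤ 2λ_A^{(1)}`, `S_R ≥ 2λ_A^{(4)}`, `S_D ≤ 2λ_B^{(1)}`, `S_U ≥ 2λ_B^{(4)}`
at each of the four states, with `S_L < 0 < S_R` and `S_D < 0 < S_U`, then each
of the four `H`-states `H_XY = U_XY - F(U_XY)/S_X - G(U_XY)/S_Y` is
admissible. -/
private lemma auxPltRhoH {Γ ρ p h : ℝ} (hΓ1' : 0 < Γ - 1) (hρ : 0 < ρ) (hp : 0 < p)
    (hρh : (Γ - 1) * (ρ * h) = (Γ - 1) * ρ + Γ * p) : p < ρ * h := by nlinarith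

private lemma auxGpLtRhoH {Γ ρ p h : ℝ} (hΓ1' : 0 < Γ - 1) (hΓ2 : Γ ≤ 2) (hρ : 0 < ρ)
    (hp : 0 < p) (hρh : (Γ - 1) * (ρ * h) = (Γ - 1) * ρ + Γ * p) : Γ * p < ρ * h := by
  nlinarith [mul_nonneg (mul_nonneg hΓ1'.le hp.le) (by linarith : (0:ℝ) ≤ 2 - Γ)]

private lemma auxMulLtOne {a b : ℝ} (h1 : 0 ≤ a) (h2 : a < 1) (h3 : 0 ≤ b) (h4 : b < 1) :
    a * b < 1 := by nlinarith

private lemma auxSigPos {σ x P : ℝ} (hσ : 0 < σ) (hkey : σ ^ 2 - x ^ 2 = P) (hP : 0 < P) :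
    0 < x + σ := by nlinarith

private lemma auxDivGe {x g2 : ℝ} (hx : 0 < x) (h1 : 0 < g2) (h2 : g2 ≤ 1) : x ≤ x / g2 := by
  rw [le_div_iff₀ h1]; nlinarith

set_option maxHeartbeats 1600000 in
lemma corePure (Γ ρ p u v ν h c g σ X0 X1 X2 X3 : ℝ)
    (hΓ1 : 1 < Γ) (hΓ2 : Γ ≤ 2) (hρ : 0 < ρ) (hp : 0 < p)
    (huv : u ^ 2 + v ^ 2 < 1) (hν : ν < 0)
    (hh : h = 1 + p / ((Γ - 1) * ρ) + p / ρ)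
    (hg : 0 < g) (hg2 : g ^ 2 = 1 - (u ^ 2 + v ^ 2))
    (hc : 0 < c) (hc2 : c ^ 2 = Γ * p / (ρ * h))
    (hσ : 0 < σ) (hσ2 : σ ^ 2 = 1 - u ^ 2 - c ^ 2 * v ^ 2)
    (hlam : ν ≤ (u * (1 - c ^ 2) - c * g * σ) / (1 - c ^ 2 * (u ^ 2 + v ^ 2)))
    (hX0 : X0 = ρ / g * (1 - ν⁻¹ * u))
    (hX1 : X1 = ρ * h / g ^ 2 * u * (1 - ν⁻¹ * u) - ν⁻¹ * p)
    (hX2 : X2 = ρ * h / g ^ 2 * v * (1 - ν⁻¹ * u))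
    (hX3 : X3 = (ρ * h / g ^ 2 - p) - ν⁻¹ * (ρ * h / g ^ 2 * u)) :
    0 < X0 ∧ 0 < X3 - Real.sqrt (X0 ^ 2 + X1 ^ 2 + X2 ^ 2) := by
  have hΓ1' : (0:ℝ) < Γ - 1 := by linarith
  have hν0 : ν ≠ 0 := ne_of_lt hν
  have ht : (0:ℝ) < 1 - (u ^ 2 + v ^ 2) := by linarith
  have hh1 : 1 < h := by
    have h1 : 0 < p / ((Γ - 1) * ρ) := by positivity
    have h2 : 0 < p / ρ := by positivity
    rw [hh]; linarith
  have hh0 : 0 < h := by linarith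
  have hρh : (Γ - 1) * (ρ * h) = (Γ - 1) * ρ + Γ * p := by
    rw [hh]; field_simp; ring
  have hc2lt : c ^ 2 < 1 := by
    rw [hc2, div_lt_one (by positivity)]
    exact auxGpLtRhoH hΓ1' hΓ2 hρ hp hρh
  obtain ⟨d, hd_def⟩ : ∃ x : ℝ, x = 1 - c ^ 2 * (u ^ 2 + v ^ 2) := ⟨_, rfl⟩
  rw [show (1 - c ^ 2 * (u ^ 2 + v ^ 2)) = d from hd_def.symm] at hlam
  have hd : 0 < d := by
    have : c ^ 2 * (u ^ 2 + v ^ 2) < 1 :=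
      auxMulLtOne (sq_nonneg c) hc2lt (by positivity) huv
    rw [hd_def]; linarith
  obtain ⟨lam, hlam_def⟩ : ∃ x : ℝ, x = (u * (1 - c ^ 2) - c * g * σ) / d := ⟨_, rfl⟩
  rw [show ((u * (1 - c ^ 2) - c * g * σ) / d) = lam from hlam_def.symm] at hlam
  have hu1 : u ^ 2 < 1 := by linarith [sq_nonneg v]
  have hkey : σ ^ 2 - (u * c * g) ^ 2 = (1 - u ^ 2) * d := by
    rw [hd_def]
    linear_combination hσ2 - u ^ 2 * c ^ 2 * hg2
  have hucgσ : 0 < u * c * g + σ :=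
    auxSigPos hσ hkey (mul_pos (by linarith) hd)
  have hulam_eq : u - lam = c * g * (u * c * g + σ) / d := by
    rw [hlam_def]; field_simp; linear_combination (-(u * c ^ 2)) * hg2 + u * hd_def
  have hulam : lam < u := by
    have h1 : 0 < c * g * (u * c * g + σ) / d := by positivity
    linarith [hulam_eq]
  have ha : 0 < u - ν := by
    have := le_trans hlam (le_refl lam); linarith [hlam, hulam]
  obtain ⟨K, hK_def⟩ : ∃ x : ℝ, x = ρ * p * (Γ + (2 - Γ) * h) / (Γ - 1) := ⟨_, rfl⟩
  have hKpos : 0 < K := by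
    have h2 : 0 ≤ (2 - Γ) * h := mul_nonneg (by linarith) hh0.le
    have h1 : 0 < Γ + (2 - Γ) * h := by linarith
    rw [hK_def]; positivity
  -- K c² - p²(1-c²) > 0
  have h3 : 0 < K * c ^ 2 - p ^ 2 * (1 - c ^ 2) := by
    have e : K * c ^ 2 - p ^ 2 * (1 - c ^ 2) =
        p ^ 2 * ((2 * Γ - 1) + (2 - Γ) * h) / ((Γ - 1) * h) := by
      rw [hK_def, hc2, hh]; field_simp; ring
    rw [e]
    have h2 : 0 ≤ (2 - Γ) * h := mul_nonneg (by linarith) hh0.le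
    have h1 : 0 < (2 * Γ - 1) + (2 - Γ) * h := by linarith
    positivity
  -- 1 - lam² identity
  have h2' : d ^ 2 - (u * (1 - c ^ 2) - c * g * σ) ^ 2 = (1 - c ^ 2) * (u * c * g + σ) ^ 2 := by
    rw [hd_def]
    linear_combination (-(c ^ 2 * (1 - (u ^ 2 + v ^ 2))) - (1 - c ^ 2)) * hσ2 +
      (-(c ^ 2 * σ ^ 2) - (1 - c ^ 2) * u ^ 2 * c ^ 2) * hg2
  have h2 : 1 - lam ^ 2 = (1 - c ^ 2) * (u * c * g + σ) ^ 2 / d ^ 2 := by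
    rw [hlam_def]; field_simp; linear_combination h2'
  -- Q(lam) > 0
  have hQlam : 0 < K / g ^ 2 * (u - lam) ^ 2 - p ^ 2 * (1 - lam ^ 2) := by
    have e : K / g ^ 2 * (u - lam) ^ 2 - p ^ 2 * (1 - lam ^ 2) =
        ((u * c * g + σ) ^ 2 / d ^ 2) * (K * c ^ 2 - p ^ 2 * (1 - c ^ 2)) := by
      rw [hulam_eq, h2]; field_simp
    rw [e]
    exact mul_pos (div_pos (pow_pos hucgσ 2) (pow_pos hd 2)) h3
  -- convexity: Q(μ) > 0 for all μ ≤ lam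
  have conv : ∀ μ : ℝ, μ ≤ lam → 0 < K / g ^ 2 * (u - μ) ^ 2 - p ^ 2 * (1 - μ ^ 2) := by
    intro μ hμ
    by_contra hcon
    push_neg at hcon
    have hQu : K / g ^ 2 * (u - u) ^ 2 - p ^ 2 * (1 - u ^ 2) < 0 := by
      have h5 : 0 < p ^ 2 * (1 - u ^ 2) := mul_pos (pow_pos hp 2) (by linarith)
      have e0 : K / g ^ 2 * (u - u) ^ 2 - p ^ 2 * (1 - u ^ 2) = -(p ^ 2 * (1 - u ^ 2)) := by ring
      rw [e0]; linarith
    have hα : 0 < K / g ^ 2 + p ^ 2 := by positivity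
    have cert : (K / g ^ 2 * (u - lam) ^ 2 - p ^ 2 * (1 - lam ^ 2)) * (u - μ) =
        (K / g ^ 2 * (u - μ) ^ 2 - p ^ 2 * (1 - μ ^ 2)) * (u - lam) +
        (K / g ^ 2 * (u - u) ^ 2 - p ^ 2 * (1 - u ^ 2)) * (lam - μ) -
        (K / g ^ 2 + p ^ 2) * (u - lam) * (lam - μ) * (u - μ) := by ring
    have t1 : (K / g ^ 2 * (u - μ) ^ 2 - p ^ 2 * (1 - μ ^ 2)) * (u - lam) ≤ 0 :=
      mul_nonpos_iff.mpr (Or.inr ⟨hcon, by linarith⟩)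
    have t2 : (K / g ^ 2 * (u - u) ^ 2 - p ^ 2 * (1 - u ^ 2)) * (lam - μ) ≤ 0 :=
      mul_nonpos_iff.mpr (Or.inr ⟨hQu.le, by linarith⟩)
    have t3 : 0 ≤ (K / g ^ 2 + p ^ 2) * (u - lam) * (lam - μ) * (u - μ) := by
      apply mul_nonneg
      apply mul_nonneg
      apply mul_nonneg hα.le
      · linarith
      · linarith
      · linarith
    have t4 : 0 < (K / g ^ 2 * (u - lam) ^ 2 - p ^ 2 * (1 - lam ^ 2)) * (u - μ) :=
      mul_pos hQlam (by linarith)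
    linarith [cert]
  -- W and E
  obtain ⟨W, hW_def⟩ : ∃ x : ℝ, x = ρ * h / g ^ 2 := ⟨_, rfl⟩
  have hWpos : 0 < W := by rw [hW_def]; positivity
  have hE : 0 < W - p := by
    have hg2le : g ^ 2 ≤ 1 := by rw [hg2]; linarith [sq_nonneg u, sq_nonneg v]
    have hρhp : p < ρ * h := auxPltRhoH hΓ1' hρ hp hρh
    have h1 : ρ * h ≤ ρ * h / g ^ 2 :=
      auxDivGe (mul_pos hρ hh0) (by positivity) hg2le
    rw [hW_def]; linarith
  -- the big identity
  have bid : ∀ μ : ℝ, K / g ^ 2 * (u - μ) ^ 2 - p ^ 2 * (1 - μ ^ 2) =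
      (W * (u - μ) + p * μ) ^ 2 - ρ ^ 2 / g ^ 2 * (u - μ) ^ 2 -
      (W * u * (u - μ) + p) ^ 2 - (W * v * (u - μ)) ^ 2 := by
    intro μ
    rw [hW_def, hK_def, hg2, hh]
    field_simp
    ring
  -- L > 0
  have hL : 0 < W * u - ν * (W - p) := by
    by_contra hcon
    push_neg at hcon
    have hμsν : W * u / (W - p) ≤ ν := by
      rw [div_le_iff₀ hE]; linarith
    have hQμs := conv (W * u / (W - p)) (le_trans hμsν hlam)
    have hzero : W * (u - W * u / (W - p)) + p * (W * u / (W - p)) = 0 := by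
      field_simp
      ring
    have hb := bid (W * u / (W - p))
    rw [hzero] at hb
    have n1 : 0 ≤ ρ ^ 2 / g ^ 2 * (u - W * u / (W - p)) ^ 2 :=
      mul_nonneg (div_nonneg (sq_nonneg ρ) (sq_nonneg g)) (sq_nonneg _)
    have n2 : 0 ≤ (W * u * (u - W * u / (W - p)) + p) ^ 2 := sq_nonneg _
    have n3 : 0 ≤ (W * v * (u - W * u / (W - p))) ^ 2 := sq_nonneg _
    linarith [hb, hQμs]
  -- final assembly
  have hνinv : ν⁻¹ < 0 := inv_lt_zero.mpr hν
  have hfac : 0 < 1 - ν⁻¹ * u := by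
    have e : 1 - ν⁻¹ * u = (-ν⁻¹) * (u - ν) := by field_simp; ring
    rw [e]; exact mul_pos (by linarith) ha
  have hX0pos : 0 < X0 := by rw [hX0]; exact mul_pos (div_pos hρ hg) hfac
  have hX3pos : 0 < X3 := by
    have e : X3 = (-ν⁻¹) * (W * u - ν * (W - p)) := by
      rw [hX3, show ρ * h / g ^ 2 = W from hW_def.symm]; field_simp; ring
    rw [e]; exact mul_pos (by linarith) hL
  have hQν := conv ν hlam
  have main : X3 ^ 2 - (X0 ^ 2 + X1 ^ 2 + X2 ^ 2) =
      (ν⁻¹) ^ 2 * (K / g ^ 2 * (u - ν) ^ 2 - p ^ 2 * (1 - ν ^ 2)) := by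
    rw [bid ν, hX0, hX1, hX2, hX3, show ρ * h / g ^ 2 = W from hW_def.symm]
    field_simp
    ring
  have h9 : 0 < (ν⁻¹) ^ 2 := by rw [sq]; exact mul_pos_of_neg_of_neg hνinv hνinv
  have hsum : X0 ^ 2 + X1 ^ 2 + X2 ^ 2 < X3 ^ 2 := by
    have := mul_pos h9 hQν
    linarith [main]
  refine ⟨hX0pos, ?_⟩
  have hs := (Real.sqrt_lt' hX3pos).mpr hsum
  linarith


lemma coreX (Γ : ℝ) (hΓ1 : 1 < Γ) (hΓ2 : Γ ≤ 2) (s : RHDState) (ν : ℝ)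
    (hν : ν < 0) (hlam : ν ≤ s.lamX1 Γ) :
    (s.U Γ - ν⁻¹ • s.Fx Γ) ∈ admissibleSet := by
  obtain ⟨ρ, u, v, p, hρ, hp, huv⟩ := s
  have hΓ1' : (0:ℝ) < Γ - 1 := by linarith
  have ht : (0:ℝ) < 1 - (u ^ 2 + v ^ 2) := by linarith
  have hg : 0 < Real.sqrt (1 - (u ^ 2 + v ^ 2)) := Real.sqrt_pos.mpr ht
  have hg2 : (Real.sqrt (1 - (u ^ 2 + v ^ 2))) ^ 2 = 1 - (u ^ 2 + v ^ 2) := Real.sq_sqrt ht.le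
  have hhpos : (0:ℝ) < 1 + p / ((Γ - 1) * ρ) + p / ρ := by positivity
  have hcarg : 0 < Γ * p / (ρ * (1 + p / ((Γ - 1) * ρ) + p / ρ)) := by positivity
  have hc : 0 < Real.sqrt (Γ * p / (ρ * (1 + p / ((Γ - 1) * ρ) + p / ρ))) := Real.sqrt_pos.mpr hcarg
  have hc2 : (Real.sqrt (Γ * p / (ρ * (1 + p / ((Γ - 1) * ρ) + p / ρ)))) ^ 2
      = Γ * p / (ρ * (1 + p / ((Γ - 1) * ρ) + p / ρ)) := Real.sq_sqrt hcarg.le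
  have hρh : (Γ - 1) * (ρ * (1 + p / ((Γ - 1) * ρ) + p / ρ)) = (Γ - 1) * ρ + Γ * p := by
    field_simp; ring
  have hc2lt : (Real.sqrt (Γ * p / (ρ * (1 + p / ((Γ - 1) * ρ) + p / ρ)))) ^ 2 < 1 := by
    rw [hc2, div_lt_one (by positivity)]
    exact auxGpLtRhoH hΓ1' hΓ2 hρ hp hρh
  have hσarg : 0 < 1 - u ^ 2 - (Real.sqrt (Γ * p / (ρ * (1 + p / ((Γ - 1) * ρ) + p / ρ)))) ^ 2 * v ^ 2 := by
    nlinarith [mul_nonneg (sub_nonneg.mpr hc2lt.le) (sq_nonneg v)]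
  have hσ : 0 < Real.sqrt (1 - u ^ 2 - (Real.sqrt (Γ * p / (ρ * (1 + p / ((Γ - 1) * ρ) + p / ρ)))) ^ 2 * v ^ 2) :=
    Real.sqrt_pos.mpr hσarg
  have hσ2 : (Real.sqrt (1 - u ^ 2 - (Real.sqrt (Γ * p / (ρ * (1 + p / ((Γ - 1) * ρ) + p / ρ)))) ^ 2 * v ^ 2)) ^ 2
      = 1 - u ^ 2 - (Real.sqrt (Γ * p / (ρ * (1 + p / ((Γ - 1) * ρ) + p / ρ)))) ^ 2 * v ^ 2 := Real.sq_sqrt hσarg.le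
  have hlam' : ν ≤ (u * (1 - (Real.sqrt (Γ * p / (ρ * (1 + p / ((Γ - 1) * ρ) + p / ρ)))) ^ 2)
      - Real.sqrt (Γ * p / (ρ * (1 + p / ((Γ - 1) * ρ) + p / ρ))) * Real.sqrt (1 - (u ^ 2 + v ^ 2)) *
        Real.sqrt (1 - u ^ 2 - (Real.sqrt (Γ * p / (ρ * (1 + p / ((Γ - 1) * ρ) + p / ρ)))) ^ 2 * v ^ 2))
      / (1 - (Real.sqrt (Γ * p / (ρ * (1 + p / ((Γ - 1) * ρ) + p / ρ)))) ^ 2 * (u ^ 2 + v ^ 2)) := by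
    have e : RHDState.lamX1 Γ ⟨ρ, u, v, p, hρ, hp, huv⟩
        = (u * (1 - (Real.sqrt (Γ * p / (ρ * (1 + p / ((Γ - 1) * ρ) + p / ρ)))) ^ 2)
      - Real.sqrt (Γ * p / (ρ * (1 + p / ((Γ - 1) * ρ) + p / ρ))) * Real.sqrt (1 - (u ^ 2 + v ^ 2)) *
        Real.sqrt (1 - u ^ 2 - (Real.sqrt (Γ * p / (ρ * (1 + p / ((Γ - 1) * ρ) + p / ρ)))) ^ 2 * v ^ 2))
      / (1 - (Real.sqrt (Γ * p / (ρ * (1 + p / ((Γ - 1) * ρ) + p / ρ)))) ^ 2 * (u ^ 2 + v ^ 2)) := by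
      simp only [RHDState.lamX1, RHDState.cs, RHDState.enth, RHDState.lorentz]
      rw [div_div_eq_mul_div, div_one]
    linarith [e ▸ hlam]
  have H := corePure Γ ρ p u v ν (1 + p / ((Γ - 1) * ρ) + p / ρ)
      (Real.sqrt (Γ * p / (ρ * (1 + p / ((Γ - 1) * ρ) + p / ρ))))
      (Real.sqrt (1 - (u ^ 2 + v ^ 2)))
      (Real.sqrt (1 - u ^ 2 - (Real.sqrt (Γ * p / (ρ * (1 + p / ((Γ - 1) * ρ) + p / ρ)))) ^ 2 * v ^ 2))
      (ρ * (1 / Real.sqrt (1 - (u ^ 2 + v ^ 2))) - ν⁻¹ * (ρ * (1 / Real.sqrt (1 - (u ^ 2 + v ^ 2))) * u))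
      (ρ * (1 + p / ((Γ - 1) * ρ) + p / ρ) * (1 / Real.sqrt (1 - (u ^ 2 + v ^ 2))) ^ 2 * u
        - ν⁻¹ * (ρ * (1 + p / ((Γ - 1) * ρ) + p / ρ) * (1 / Real.sqrt (1 - (u ^ 2 + v ^ 2))) ^ 2 * u * u + p))
      (ρ * (1 + p / ((Γ - 1) * ρ) + p / ρ) * (1 / Real.sqrt (1 - (u ^ 2 + v ^ 2))) ^ 2 * v
        - ν⁻¹ * (ρ * (1 + p / ((Γ - 1) * ρ) + p / ρ) * (1 / Real.sqrt (1 - (u ^ 2 + v ^ 2))) ^ 2 * v * u))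
      ((ρ * (1 + p / ((Γ - 1) * ρ) + p / ρ) * (1 / Real.sqrt (1 - (u ^ 2 + v ^ 2))) ^ 2 - p)
        - ν⁻¹ * ((ρ * (1 + p / ((Γ - 1) * ρ) + p / ρ) * (1 / Real.sqrt (1 - (u ^ 2 + v ^ 2))) ^ 2 - p + p) * u))
      hΓ1 hΓ2 hρ hp huv hν rfl hg hg2 hc hc2 hσ hσ2 hlam'
      (by ring) (by ring) (by ring) (by ring)
  obtain ⟨P0, P3⟩ := H
  constructor
  · show (0:ℝ) < _
    simpa [RHDState.U, RHDState.Fx, RHDState.D, RHDState.lorentz] using P0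
  · show (0:ℝ) < _ - _
    have e0 : (RHDState.U Γ ⟨ρ, u, v, p, hρ, hp, huv⟩ - ν⁻¹ • RHDState.Fx Γ ⟨ρ, u, v, p, hρ, hp, huv⟩) 0
        = ρ * (1 / Real.sqrt (1 - (u ^ 2 + v ^ 2))) - ν⁻¹ * (ρ * (1 / Real.sqrt (1 - (u ^ 2 + v ^ 2))) * u) := by
      simp [RHDState.U, RHDState.Fx, RHDState.D, RHDState.lorentz]
    have e1 : (RHDState.U Γ ⟨ρ, u, v, p, hρ, hp, huv⟩ - ν⁻¹ • RHDState.Fx Γ ⟨ρ, u, v, p, hρ, hp, huv⟩) 1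
        = ρ * (1 + p / ((Γ - 1) * ρ) + p / ρ) * (1 / Real.sqrt (1 - (u ^ 2 + v ^ 2))) ^ 2 * u
        - ν⁻¹ * (ρ * (1 + p / ((Γ - 1) * ρ) + p / ρ) * (1 / Real.sqrt (1 - (u ^ 2 + v ^ 2))) ^ 2 * u * u + p) := by
      simp [RHDState.U, RHDState.Fx, RHDState.m1, RHDState.enth, RHDState.lorentz]
    have e2 : (RHDState.U Γ ⟨ρ, u, v, p, hρ, hp, huv⟩ - ν⁻¹ • RHDState.Fx Γ ⟨ρ, u, v, p, hρ, hp, huv⟩) 2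
        = ρ * (1 + p / ((Γ - 1) * ρ) + p / ρ) * (1 / Real.sqrt (1 - (u ^ 2 + v ^ 2))) ^ 2 * v
        - ν⁻¹ * (ρ * (1 + p / ((Γ - 1) * ρ) + p / ρ) * (1 / Real.sqrt (1 - (u ^ 2 + v ^ 2))) ^ 2 * v * u) := by
      simp [RHDState.U, RHDState.Fx, RHDState.m2, RHDState.enth, RHDState.lorentz]
    have e3 : (RHDState.U Γ ⟨ρ, u, v, p, hρ, hp, huv⟩ - ν⁻¹ • RHDState.Fx Γ ⟨ρ, u, v, p, hρ, hp, huv⟩) 3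
        = (ρ * (1 + p / ((Γ - 1) * ρ) + p / ρ) * (1 / Real.sqrt (1 - (u ^ 2 + v ^ 2))) ^ 2 - p)
        - ν⁻¹ * ((ρ * (1 + p / ((Γ - 1) * ρ) + p / ρ) * (1 / Real.sqrt (1 - (u ^ 2 + v ^ 2))) ^ 2 - p + p) * u) := by
      simp [RHDState.U, RHDState.Fx, RHDState.En, RHDState.enth, RHDState.lorentz]
    rw [e0, e1, e2, e3]
    exact P3


private def reflX (s : RHDState) : RHDState :=
  ⟨s.ρ, -s.u1, s.u2, s.p, s.hρ, s.hp, by nlinarith [s.hu, sq_nonneg s.u1]⟩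

private def swapS (s : RHDState) : RHDState :=
  ⟨s.ρ, s.u2, s.u1, s.p, s.hρ, s.hp, by linarith [s.hu]⟩

private lemma lamX1_reflX (Γ : ℝ) (s : RHDState) :
    (reflX s).lamX1 Γ = -(s.lamX4 Γ) := by
  simp only [reflX, RHDState.lamX1, RHDState.lamX4, RHDState.cs, RHDState.enth,
    RHDState.lorentz, neg_sq]
  ring

private lemma lamX1_swap (Γ : ℝ) (s : RHDState) :
    (swapS s).lamX1 Γ = s.lamY1 Γ := by
  simp only [swapS, RHDState.lamX1, RHDState.lamY1, RHDState.cs, RHDState.enth,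
    RHDState.lorentz]
  rw [show (1 - (s.u2 ^ 2 + s.u1 ^ 2)) = (1 - (s.u1 ^ 2 + s.u2 ^ 2)) by ring,
    show ∀ x : ℝ, 1 - x * (s.u2 ^ 2 + s.u1 ^ 2) = 1 - x * (s.u1 ^ 2 + s.u2 ^ 2) from fun x => by ring]

private lemma lamX4_swap (Γ : ℝ) (s : RHDState) :
    (swapS s).lamX4 Γ = s.lamY4 Γ := by
  simp only [swapS, RHDState.lamX4, RHDState.lamY4, RHDState.cs, RHDState.enth,
    RHDState.lorentz]
  rw [show (1 - (s.u2 ^ 2 + s.u1 ^ 2)) = (1 - (s.u1 ^ 2 + s.u2 ^ 2)) by ring,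
    show ∀ x : ℝ, 1 - x * (s.u2 ^ 2 + s.u1 ^ 2) = 1 - x * (s.u1 ^ 2 + s.u2 ^ 2) from fun x => by ring]

private lemma coreX4 (Γ : ℝ) (hΓ1 : 1 < Γ) (hΓ2 : Γ ≤ 2) (s : RHDState) (ν : ℝ)
    (hν : 0 < ν) (hlam : s.lamX4 Γ ≤ ν) :
    (s.U Γ - ν⁻¹ • s.Fx Γ) ∈ admissibleSet := by
  obtain ⟨h0, h3⟩ := coreX Γ hΓ1 hΓ2 (reflX s) (-ν) (by linarith)
    (by rw [lamX1_reflX]; linarith)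
  have E0 : ((reflX s).U Γ - (-ν)⁻¹ • (reflX s).Fx Γ) 0 = (s.U Γ - ν⁻¹ • s.Fx Γ) 0 := by
    simp [reflX, RHDState.U, RHDState.Fx, RHDState.D, RHDState.lorentz, neg_sq]
  have E1 : ((reflX s).U Γ - (-ν)⁻¹ • (reflX s).Fx Γ) 1 = -((s.U Γ - ν⁻¹ • s.Fx Γ) 1) := by
    simp [reflX, RHDState.U, RHDState.Fx, RHDState.m1, RHDState.enth, RHDState.lorentz, neg_sq]
    ring
  have E2 : ((reflX s).U Γ - (-ν)⁻¹ • (reflX s).Fx Γ) 2 = (s.U Γ - ν⁻¹ • s.Fx Γ) 2 := by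
    simp [reflX, RHDState.U, RHDState.Fx, RHDState.m2, RHDState.enth, RHDState.lorentz, neg_sq]
  have E3 : ((reflX s).U Γ - (-ν)⁻¹ • (reflX s).Fx Γ) 3 = (s.U Γ - ν⁻¹ • s.Fx Γ) 3 := by
    simp [reflX, RHDState.U, RHDState.Fx, RHDState.En, RHDState.enth, RHDState.lorentz, neg_sq]
  rw [E0] at h0
  rw [E0, E1, E2, E3, neg_sq] at h3
  exact ⟨h0, h3⟩

private lemma coreY1 (Γ : ℝ) (hΓ1 : 1 < Γ) (hΓ2 : Γ ≤ 2) (s : RHDState) (ν : ℝ)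
    (hν : ν < 0) (hlam : ν ≤ s.lamY1 Γ) :
    (s.U Γ - ν⁻¹ • s.Fy Γ) ∈ admissibleSet := by
  obtain ⟨h0, h3⟩ := coreX Γ hΓ1 hΓ2 (swapS s) ν hν (by rw [lamX1_swap]; linarith)
  have E0 : ((swapS s).U Γ - ν⁻¹ • (swapS s).Fx Γ) 0 = (s.U Γ - ν⁻¹ • s.Fy Γ) 0 := by
    simp [swapS, RHDState.U, RHDState.Fx, RHDState.Fy, RHDState.D, RHDState.lorentz]
    rw [show (1 - (s.u2 ^ 2 + s.u1 ^ 2)) = (1 - (s.u1 ^ 2 + s.u2 ^ 2)) by ring]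
  have E1 : ((swapS s).U Γ - ν⁻¹ • (swapS s).Fx Γ) 1 = (s.U Γ - ν⁻¹ • s.Fy Γ) 2 := by
    simp [swapS, RHDState.U, RHDState.Fx, RHDState.Fy, RHDState.m1, RHDState.m2,
      RHDState.enth, RHDState.lorentz]
    rw [show (1 - (s.u2 ^ 2 + s.u1 ^ 2)) = (1 - (s.u1 ^ 2 + s.u2 ^ 2)) by ring]
  have E2 : ((swapS s).U Γ - ν⁻¹ • (swapS s).Fx Γ) 2 = (s.U Γ - ν⁻¹ • s.Fy Γ) 1 := by
    simp [swapS, RHDState.U, RHDState.Fx, RHDState.Fy, RHDState.m1, RHDState.m2,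
      RHDState.enth, RHDState.lorentz]
    rw [show (1 - (s.u2 ^ 2 + s.u1 ^ 2)) = (1 - (s.u1 ^ 2 + s.u2 ^ 2)) by ring]
  have E3 : ((swapS s).U Γ - ν⁻¹ • (swapS s).Fx Γ) 3 = (s.U Γ - ν⁻¹ • s.Fy Γ) 3 := by
    simp [swapS, RHDState.U, RHDState.Fx, RHDState.Fy, RHDState.En,
      RHDState.enth, RHDState.lorentz]
    rw [show (1 - (s.u2 ^ 2 + s.u1 ^ 2)) = (1 - (s.u1 ^ 2 + s.u2 ^ 2)) by ring]
  rw [E0] at h0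
  rw [E0, E1, E2, E3] at h3
  refine ⟨h0, ?_⟩
  rwa [show ((s.U Γ - ν⁻¹ • s.Fy Γ) 0) ^ 2 + ((s.U Γ - ν⁻¹ • s.Fy Γ) 2) ^ 2 +
      ((s.U Γ - ν⁻¹ • s.Fy Γ) 1) ^ 2 = ((s.U Γ - ν⁻¹ • s.Fy Γ) 0) ^ 2 +
      ((s.U Γ - ν⁻¹ • s.Fy Γ) 1) ^ 2 + ((s.U Γ - ν⁻¹ • s.Fy Γ) 2) ^ 2 from by ring] at h3

private lemma coreY4 (Γ : ℝ) (hΓ1 : 1 < Γ) (hΓ2 : Γ ≤ 2) (s : RHDState) (ν : ℝ)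
    (hν : 0 < ν) (hlam : s.lamY4 Γ ≤ ν) :
    (s.U Γ - ν⁻¹ • s.Fy Γ) ∈ admissibleSet := by
  obtain ⟨h0, h3⟩ := coreX4 Γ hΓ1 hΓ2 (swapS s) ν hν (by rw [lamX4_swap]; linarith)
  have E0 : ((swapS s).U Γ - ν⁻¹ • (swapS s).Fx Γ) 0 = (s.U Γ - ν⁻¹ • s.Fy Γ) 0 := by
    simp [swapS, RHDState.U, RHDState.Fx, RHDState.Fy, RHDState.D, RHDState.lorentz]
    rw [show (1 - (s.u2 ^ 2 + s.u1 ^ 2)) = (1 - (s.u1 ^ 2 + s.u2 ^ 2)) by ring]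
  have E1 : ((swapS s).U Γ - ν⁻¹ • (swapS s).Fx Γ) 1 = (s.U Γ - ν⁻¹ • s.Fy Γ) 2 := by
    simp [swapS, RHDState.U, RHDState.Fx, RHDState.Fy, RHDState.m1, RHDState.m2,
      RHDState.enth, RHDState.lorentz]
    rw [show (1 - (s.u2 ^ 2 + s.u1 ^ 2)) = (1 - (s.u1 ^ 2 + s.u2 ^ 2)) by ring]
  have E2 : ((swapS s).U Γ - ν⁻¹ • (swapS s).Fx Γ) 2 = (s.U Γ - ν⁻¹ • s.Fy Γ) 1 := by
    simp [swapS, RHDState.U, RHDState.Fx, RHDState.Fy, RHDState.m1, RHDState.m2,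
      RHDState.enth, RHDState.lorentz]
    rw [show (1 - (s.u2 ^ 2 + s.u1 ^ 2)) = (1 - (s.u1 ^ 2 + s.u2 ^ 2)) by ring]
  have E3 : ((swapS s).U Γ - ν⁻¹ • (swapS s).Fx Γ) 3 = (s.U Γ - ν⁻¹ • s.Fy Γ) 3 := by
    simp [swapS, RHDState.U, RHDState.Fx, RHDState.Fy, RHDState.En,
      RHDState.enth, RHDState.lorentz]
    rw [show (1 - (s.u2 ^ 2 + s.u1 ^ 2)) = (1 - (s.u1 ^ 2 + s.u2 ^ 2)) by ring]
  rw [E0] at h0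
  rw [E0, E1, E2, E3] at h3
  refine ⟨h0, ?_⟩
  rwa [show ((s.U Γ - ν⁻¹ • s.Fy Γ) 0) ^ 2 + ((s.U Γ - ν⁻¹ • s.Fy Γ) 2) ^ 2 +
      ((s.U Γ - ν⁻¹ • s.Fy Γ) 1) ^ 2 = ((s.U Γ - ν⁻¹ • s.Fy Γ) 0) ^ 2 +
      ((s.U Γ - ν⁻¹ • s.Fy Γ) 1) ^ 2 + ((s.U Γ - ν⁻¹ • s.Fy Γ) 2) ^ 2 from by ring] at h3

private lemma sqrt3_triangle (a0 a1 a2 b0 b1 b2 : ℝ) :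
    Real.sqrt ((a0 + b0) ^ 2 + (a1 + b1) ^ 2 + (a2 + b2) ^ 2) ≤
      Real.sqrt (a0 ^ 2 + a1 ^ 2 + a2 ^ 2) + Real.sqrt (b0 ^ 2 + b1 ^ 2 + b2 ^ 2) := by
  have hA : (0:ℝ) ≤ a0 ^ 2 + a1 ^ 2 + a2 ^ 2 := by positivity
  have hB : (0:ℝ) ≤ b0 ^ 2 + b1 ^ 2 + b2 ^ 2 := by positivity
  have hdot : a0 * b0 + a1 * b1 + a2 * b2 ≤
      Real.sqrt (a0 ^ 2 + a1 ^ 2 + a2 ^ 2) * Real.sqrt (b0 ^ 2 + b1 ^ 2 + b2 ^ 2) := by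
    rcases le_or_gt (a0 * b0 + a1 * b1 + a2 * b2) 0 with hle | hlt
    · exact le_trans hle (mul_nonneg (Real.sqrt_nonneg _) (Real.sqrt_nonneg _))
    · rw [← Real.sqrt_mul hA]
      rw [show a0 * b0 + a1 * b1 + a2 * b2
          = Real.sqrt ((a0 * b0 + a1 * b1 + a2 * b2) ^ 2) from
        (Real.sqrt_sq hlt.le).symm]
      apply Real.sqrt_le_sqrt
      nlinarith [sq_nonneg (a0 * b1 - a1 * b0), sq_nonneg (a0 * b2 - a2 * b0),
        sq_nonneg (a1 * b2 - a2 * b1)]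
  have expand : (Real.sqrt (a0 ^ 2 + a1 ^ 2 + a2 ^ 2) + Real.sqrt (b0 ^ 2 + b1 ^ 2 + b2 ^ 2)) ^ 2
      = (a0 ^ 2 + a1 ^ 2 + a2 ^ 2) + (b0 ^ 2 + b1 ^ 2 + b2 ^ 2) +
        2 * (Real.sqrt (a0 ^ 2 + a1 ^ 2 + a2 ^ 2) * Real.sqrt (b0 ^ 2 + b1 ^ 2 + b2 ^ 2)) := by
    linear_combination Real.sq_sqrt hA + Real.sq_sqrt hB
  have hS : (a0 + b0) ^ 2 + (a1 + b1) ^ 2 + (a2 + b2) ^ 2 ≤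
      (Real.sqrt (a0 ^ 2 + a1 ^ 2 + a2 ^ 2) + Real.sqrt (b0 ^ 2 + b1 ^ 2 + b2 ^ 2)) ^ 2 := by
    rw [expand]; nlinarith [hdot]
  calc Real.sqrt ((a0 + b0) ^ 2 + (a1 + b1) ^ 2 + (a2 + b2) ^ 2)
      ≤ Real.sqrt ((Real.sqrt (a0 ^ 2 + a1 ^ 2 + a2 ^ 2) + Real.sqrt (b0 ^ 2 + b1 ^ 2 + b2 ^ 2)) ^ 2) :=
        Real.sqrt_le_sqrt hS
    _ = _ := Real.sqrt_sq (by positivity)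

private lemma half_mem {A B : Fin 4 → ℝ} (hA : A ∈ admissibleSet) (hB : B ∈ admissibleSet) :
    ((2:ℝ)⁻¹ • A + (2:ℝ)⁻¹ • B) ∈ admissibleSet := by
  obtain ⟨hA0, hA3⟩ := hA
  obtain ⟨hB0, hB3⟩ := hB
  have sA : Real.sqrt ((A 0) ^ 2 + (A 1) ^ 2 + (A 2) ^ 2) < A 3 := by linarith
  have sB : Real.sqrt ((B 0) ^ 2 + (B 1) ^ 2 + (B 2) ^ 2) < B 3 := by linarith
  have hcomp : ∀ i, ((2:ℝ)⁻¹ • A + (2:ℝ)⁻¹ • B) i = 2⁻¹ * A i + 2⁻¹ * B i := by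
    intro i; simp
  constructor
  · rw [hcomp 0]; positivity
  · rw [hcomp 0, hcomp 1, hcomp 2, hcomp 3]
    have tri := sqrt3_triangle (2⁻¹ * A 0) (2⁻¹ * A 1) (2⁻¹ * A 2)
      (2⁻¹ * B 0) (2⁻¹ * B 1) (2⁻¹ * B 2)
    have hsA : Real.sqrt ((2⁻¹ * A 0) ^ 2 + (2⁻¹ * A 1) ^ 2 + (2⁻¹ * A 2) ^ 2)
        = 2⁻¹ * Real.sqrt ((A 0) ^ 2 + (A 1) ^ 2 + (A 2) ^ 2) := by
      rw [show (2⁻¹ * A 0) ^ 2 + (2⁻¹ * A 1) ^ 2 + (2⁻¹ * A 2) ^ 2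
        = (2⁻¹:ℝ) ^ 2 * ((A 0) ^ 2 + (A 1) ^ 2 + (A 2) ^ 2) by ring,
        Real.sqrt_mul (by positivity), Real.sqrt_sq (by norm_num)]
    have hsB : Real.sqrt ((2⁻¹ * B 0) ^ 2 + (2⁻¹ * B 1) ^ 2 + (2⁻¹ * B 2) ^ 2)
        = 2⁻¹ * Real.sqrt ((B 0) ^ 2 + (B 1) ^ 2 + (B 2) ^ 2) := by
      rw [show (2⁻¹ * B 0) ^ 2 + (2⁻¹ * B 1) ^ 2 + (2⁻¹ * B 2) ^ 2
        = (2⁻¹:ℝ) ^ 2 * ((B 0) ^ 2 + (B 1) ^ 2 + (B 2) ^ 2) by ring,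
        Real.sqrt_mul (by positivity), Real.sqrt_sq (by norm_num)]
    rw [hsA, hsB] at tri
    linarith


theorem H_states_admissible (Γ : ℝ) (hΓ1 : 1 < Γ) (hΓ2 : Γ ≤ 2)
    (sLD sRD sLU sRU : RHDState)
    (hLD : sLD.U Γ ∈ admissibleSet) (hRD : sRD.U Γ ∈ admissibleSet)
    (hLU : sLU.U Γ ∈ admissibleSet) (hRU : sRU.U Γ ∈ admissibleSet)
    (SL SR SD SU : ℝ)
    (hSL : SL ≤ 2 * sLD.lamX1 Γ ∧ SL ≤ 2 * sRD.lamX1 Γ ∧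
           SL ≤ 2 * sLU.lamX1 Γ ∧ SL ≤ 2 * sRU.lamX1 Γ)
    (hSR : SR ≥ 2 * sLD.lamX4 Γ ∧ SR ≥ 2 * sRD.lamX4 Γ ∧
           SR ≥ 2 * sLU.lamX4 Γ ∧ SR ≥ 2 * sRU.lamX4 Γ)
    (hSD : SD ≤ 2 * sLD.lamY1 Γ ∧ SD ≤ 2 * sRD.lamY1 Γ ∧
           SD ≤ 2 * sLU.lamY1 Γ ∧ SD ≤ 2 * sRU.lamY1 Γ)
    (hSU : SU ≥ 2 * sLD.lamY4 Γ ∧ SU ≥ 2 * sRD.lamY4 Γ ∧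
           SU ≥ 2 * sLU.lamY4 Γ ∧ SU ≥ 2 * sRU.lamY4 Γ)
    (hL0 : SL < 0) (hR0 : 0 < SR) (hD0 : SD < 0) (hU0 : 0 < SU) :
    (sLD.U Γ - SL⁻¹ • sLD.Fx Γ - SD⁻¹ • sLD.Fy Γ) ∈ admissibleSet ∧
    (sRD.U Γ - SR⁻¹ • sRD.Fx Γ - SD⁻¹ • sRD.Fy Γ) ∈ admissibleSet ∧
    (sLU.U Γ - SL⁻¹ • sLU.Fx Γ - SU⁻¹ • sLU.Fy Γ) ∈ admissibleSet ∧
    (sRU.U Γ - SR⁻¹ • sRU.Fx Γ - SU⁻¹ • sRU.Fy Γ) ∈ admissibleSet := by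
  have decomp : ∀ (s : RHDState) (SX SY : ℝ), SX ≠ 0 → SY ≠ 0 →
      s.U Γ - SX⁻¹ • s.Fx Γ - SY⁻¹ • s.Fy Γ =
      (2:ℝ)⁻¹ • (s.U Γ - (SX / 2)⁻¹ • s.Fx Γ) + (2:ℝ)⁻¹ • (s.U Γ - (SY / 2)⁻¹ • s.Fy Γ) := by
    intro s SX SY hX hY
    funext i
    simp only [Pi.sub_apply, Pi.smul_apply, Pi.add_apply, smul_eq_mul]
    field_simp
    ring
  refine ⟨?_, ?_, ?_, ?_⟩
  · rw [decomp sLD SL SD (ne_of_lt hL0) (ne_of_lt hD0)]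
    exact half_mem
      (coreX Γ hΓ1 hΓ2 sLD (SL / 2) (by linarith) (by linarith [hSL.1]))
      (coreY1 Γ hΓ1 hΓ2 sLD (SD / 2) (by linarith) (by linarith [hSD.1]))
  · rw [decomp sRD SR SD (ne_of_gt hR0) (ne_of_lt hD0)]
    exact half_mem
      (coreX4 Γ hΓ1 hΓ2 sRD (SR / 2) (by linarith) (by linarith [hSR.1]))
      (coreY1 Γ hΓ1 hΓ2 sRD (SD / 2) (by linarith) (by linarith [hSD.2.1]))
  · rw [decomp sLU SL SU (ne_of_lt hL0) (ne_of_gt hU0)]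
    exact half_mem
      (coreX Γ hΓ1 hΓ2 sLU (SL / 2) (by linarith) (by linarith [hSL.2.2.1]))
      (coreY4 Γ hΓ1 hΓ2 sLU (SU / 2) (by linarith) (by linarith [hSU.2.2.1]))
  · rw [decomp sRU SR SU (ne_of_gt hR0) (ne_of_gt hU0)]
    exact half_mem
      (coreX4 Γ hΓ1 hΓ2 sRU (SR / 2) (by linarith) (by linarith [hSR.2.2.2]))
      (coreY4 Γ hΓ1 hΓ2 sRU (SU / 2) (by linarith) (by linarith [hSU.2.2.2]))
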